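/- For the multicalibration boosting dynamics with unit rescaling weights, for every integer T ≥ 1, the minimum gap between successive predictions satisfies min_{0 ≤ t ≤ T−1} ‖f_{t+1} − f_t‖₂ ≤ √η · ‖y − f₀‖₂ / √T. -/

import Mathlib

open Matrix
open scoped RealInnerProductSpace

/-- The action of a real matrix on vectors of `EuclideanSpace`. -/
noncomputable def mulVecE {m n : Type*} [Fintype m] [Fintype n] [DecidableEq n]
    (A : Matrix m n ℝ) (v : EuclideanSpace ℝ n) : EuclideanSpace ℝ m :=
  Matrix.toEuclideanLin A v

lemma mulVecE_mulVecE {n : Type*} [Fintype n] [DecidableEq n]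
    (A B : Matrix n n ℝ) (v : EuclideanSpace ℝ n) :
    mulVecE A (mulVecE B v) = mulVecE (A * B) v := by
  simp [mulVecE, Matrix.toEuclideanLin_apply, Matrix.mulVec_mulVec]

/-- **O(1/√T) rate for the minimum gap, multicalibration boosting with unit weights.**
For the dynamics `f_{t+1} = f_t + η A(f_t)(y - f_t)` with orthogonal projections `A(f)`
and `η ∈ (0,1]`, for every `T ≥ 1`:
`min_{0 ≤ t ≤ T-1} ‖f_{t+1} - f_t‖₂ ≤ √η ‖y - f₀‖₂ / √T`. -/
theorem multicalibration_boosting_min_gap_rate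
    {n : ℕ} (y : EuclideanSpace ℝ (Fin n)) (η : ℝ) (hη0 : 0 < η) (hη1 : η ≤ 1)
    (A : EuclideanSpace ℝ (Fin n) → Matrix (Fin n) (Fin n) ℝ)
    (hAsymm : ∀ f, (A f)ᵀ = A f) (hAproj : ∀ f, A f * A f = A f)
    (f : ℕ → EuclideanSpace ℝ (Fin n))
    (hf : ∀ t, f (t + 1) = f t + η • mulVecE (A (f t)) (y - f t)) :
    ∀ T : ℕ, ∀ hT : 1 ≤ T,
      (Finset.range T).inf'
          (Finset.nonempty_range_iff.mpr (Nat.one_le_iff_ne_zero.mp hT))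
          (fun t => ‖f (t + 1) - f t‖)
        ≤ Real.sqrt η * ‖y - f 0‖ / Real.sqrt T := by
  have key : ∀ t, ‖f (t + 1) - f t‖ ^ 2 ≤ η * (‖y - f t‖ ^ 2 - ‖y - f (t + 1)‖ ^ 2) := by
    intro t
    set w : EuclideanSpace ℝ (Fin n) := mulVecE (A (f t)) (y - f t) with hw
    have hgap : f (t + 1) - f t = η • w := by rw [hf t]; abel
    have herr : y - f (t + 1) = (y - f t) - η • w := by rw [hf t]; abel
    -- symmetry of the projection
    have hherm : (A (f t)).IsHermitian := by
      have : (A (f t))ᴴ = (A (f t))ᵀ := by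
        ext i j; simp [Matrix.conjTranspose_apply]
      rw [Matrix.IsHermitian, this, hAsymm]
    have hsym := (Matrix.isHermitian_iff_isSymmetric).mp hherm
    -- ⟪w, y - f t⟫ = ‖w‖²
    have hkey : (inner ℝ (w) (y - f t) : ℝ) = ‖w‖ ^ 2 := by
      have hw' : Matrix.toEuclideanLin (A (f t)) (y - f t) = w := rfl
      have hfix : Matrix.toEuclideanLin (A (f t)) w = w := by
        have h2 := mulVecE_mulVecE (A (f t)) (A (f t)) (y - f t)
        rw [hAproj] at h2
        calc Matrix.toEuclideanLin (A (f t)) w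
            = mulVecE (A (f t)) (mulVecE (A (f t)) (y - f t)) := rfl
          _ = mulVecE (A (f t)) (y - f t) := h2
          _ = w := rfl
      calc (inner ℝ (w) (y - f t) : ℝ)
          = (inner ℝ (Matrix.toEuclideanLin (A (f t)) w) (y - f t) : ℝ) := by rw [hfix]
        _ = (inner ℝ (w) (Matrix.toEuclideanLin (A (f t)) (y - f t)) : ℝ) := hsym _ _
        _ = (inner ℝ (w) (w) : ℝ) := by rw [hw']
        _ = ‖w‖ ^ 2 := real_inner_self_eq_norm_sq _
    have hexp : ‖y - f (t + 1)‖ ^ 2 = ‖y - f t‖ ^ 2 - (2 * η - η ^ 2) * ‖w‖ ^ 2 := by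
      rw [herr, @norm_sub_sq_real]
      rw [real_inner_smul_right, real_inner_comm, hkey, norm_smul]
      simp [abs_of_pos hη0]
      ring
    have hgapnorm : ‖f (t + 1) - f t‖ ^ 2 = η ^ 2 * ‖w‖ ^ 2 := by
      rw [hgap, norm_smul]; simp [abs_of_pos hη0]; ring
    have hw2 : 0 ≤ ‖w‖ ^ 2 := sq_nonneg _
    rw [hgapnorm, hexp]
    nlinarith
  intro T hT
  have hne : (Finset.range T).Nonempty :=
    Finset.nonempty_range_iff.mpr (Nat.one_le_iff_ne_zero.mp hT)
  set m := (Finset.range T).inf' hne (fun t => ‖f (t + 1) - f t‖) with hm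
  have hm0 : 0 ≤ m := by
    obtain ⟨t, ht, hteq⟩ := Finset.exists_mem_eq_inf' hne (fun t => ‖f (t + 1) - f t‖)
    rw [hm, hteq]; exact norm_nonneg _
  -- sum bound
  have hsum : (T : ℝ) * m ^ 2 ≤ η * ‖y - f 0‖ ^ 2 := by
    have h1 : (T : ℝ) * m ^ 2 ≤ ∑ t ∈ Finset.range T, ‖f (t + 1) - f t‖ ^ 2 := by
      have : ∑ t ∈ Finset.range T, m ^ 2 ≤ ∑ t ∈ Finset.range T, ‖f (t + 1) - f t‖ ^ 2 := by
        apply Finset.sum_le_sum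
        intro t ht
        have := Finset.inf'_le (fun t => ‖f (t + 1) - f t‖) ht
        exact pow_le_pow_left₀ hm0 this 2
      simpa using this
    have h2 : ∑ t ∈ Finset.range T, ‖f (t + 1) - f t‖ ^ 2
        ≤ η * (‖y - f 0‖ ^ 2 - ‖y - f T‖ ^ 2) := by
      have := Finset.sum_le_sum (fun t (_ : t ∈ Finset.range T) => key t)
      refine this.trans ?_
      rw [← Finset.mul_sum]
      have : ∑ t ∈ Finset.range T, (‖y - f t‖ ^ 2 - ‖y - f (t + 1)‖ ^ 2)
          = ‖y - f 0‖ ^ 2 - ‖y - f T‖ ^ 2 := by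
        rw [Finset.sum_range_sub' (fun t => ‖y - f t‖ ^ 2)]
      rw [this]
    have h3 : η * (‖y - f 0‖ ^ 2 - ‖y - f T‖ ^ 2) ≤ η * ‖y - f 0‖ ^ 2 := by
      nlinarith [sq_nonneg ‖y - f T‖]
    linarith
  have hTpos : (0 : ℝ) < T := by exact_mod_cast hT
  have hrhs : Real.sqrt η * ‖y - f 0‖ / Real.sqrt T
      = Real.sqrt (η * ‖y - f 0‖ ^ 2 / T) := by
    rw [Real.sqrt_div' _ (le_of_lt hTpos), Real.sqrt_mul (le_of_lt hη0),
      Real.sqrt_sq (norm_nonneg _)]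
  rw [hrhs]
  have hm2 : m ^ 2 ≤ η * ‖y - f 0‖ ^ 2 / T := by
    rw [le_div_iff₀ hTpos]; linarith
  calc m = Real.sqrt (m ^ 2) := (Real.sqrt_sq hm0).symm
    _ ≤ _ := Real.sqrt_le_sqrt hm2
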